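/- Let A be an n×n real symmetric positive semidefinite matrix with eigenvalues λ₁ ≥ ⋯ ≥ λ_n, let μ > 0, and let Â = U Λ̂ Uᵀ be any rank-ℓ Nyström approximation of A (so Â = A⟨X⟩ for some test matrix X, U ∈ ℝ^{n×ℓ} has orthonormal columns with ℓ < n, and Λ̂ = diag(λ̂₁ ≥ ⋯ ≥ λ̂_ℓ) is psd). Set E = A − Â and define the Nyström preconditioner P = (λ̂_ℓ+μ)⁻¹ U(Λ̂+μI)Uᵀ + (I − UUᵀ). Then max{(λ̂_ℓ+μ)/(λ_n+μ), 1} ≤ κ₂(P^{-1/2}(A+μI)P^{-1/2}) ≤ (λ̂_ℓ + μ + ‖E‖) · min{ 1/μ, (λ̂_ℓ + λ_n + 2μ) / ((λ̂_ℓ+μ)(λ_n+μ)) }. -/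

import Mathlib

open Matrix MeasureTheory ProbabilityTheory
open scoped Classical

/-- Moore–Penrose pseudoinverse (characterized by the four Penrose conditions). -/
noncomputable def pinv {m n : ℕ} (A : Matrix (Fin m) (Fin n) ℝ) : Matrix (Fin n) (Fin m) ℝ :=
  if h : ∃ B : Matrix (Fin n) (Fin m) ℝ,
      A * B * A = A ∧ B * A * B = B ∧ (A * B)ᵀ = A * B ∧ (B * A)ᵀ = B * A
  then h.choose else 0

/-- Nyström approximation of `A` with respect to the test matrix `X`. -/
noncomputable def nystrom {n l : ℕ} (A : Matrix (Fin n) (Fin n) ℝ)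
    (X : Matrix (Fin n) (Fin l) ℝ) : Matrix (Fin n) (Fin n) ℝ :=
  A * X * pinv (Xᵀ * A * X) * (A * X)ᵀ

/-- Spectral (ℓ² operator) norm of a matrix. -/
noncomputable def specNorm {m n : ℕ} (M : Matrix (Fin m) (Fin n) ℝ) : ℝ :=
  ‖LinearMap.toContinuousLinearMap (Matrix.toEuclideanLin M)‖

/-- Frobenius norm of a matrix. -/
noncomputable def frobNorm {m n : ℕ} (M : Matrix (Fin m) (Fin n) ℝ) : ℝ :=
  Real.sqrt (∑ i, ∑ j, (M i j) ^ 2)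

/-- Euclidean norm of a vector. -/
noncomputable def euclNorm {n : ℕ} (x : Fin n → ℝ) : ℝ :=
  Real.sqrt (∑ i, (x i) ^ 2)

/-- Law of an `n × l` random matrix with independent standard normal entries. -/
noncomputable def gaussianEnsemble (n l : ℕ) : Measure (Fin n → Fin l → ℝ) :=
  Measure.pi fun _ => Measure.pi fun _ => gaussianReal 0 1

/-- The psd square root of a psd matrix (junk value `0` otherwise). -/
noncomputable def matSqrt {n : ℕ} (M : Matrix (Fin n) (Fin n) ℝ) : Matrix (Fin n) (Fin n) ℝ :=
  if hM : M.PosSemidef then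
    hM.1.eigenvectorUnitary.1 * diagonal ((RCLike.ofReal : ℝ → ℝ) ∘ (√·) ∘ hM.1.eigenvalues) *
      (star hM.1.eigenvectorUnitary : Matrix (Fin n) (Fin n) ℝ) else 0

/-- ℓ² condition number of a symmetric matrix: ratio of the largest to the smallest
eigenvalue (junk value `0` for non-symmetric matrices). -/
noncomputable def kappa {n : ℕ} (M : Matrix (Fin n) (Fin n) ℝ) : ℝ :=
  if hM : M.IsHermitian then (⨆ i, hM.eigenvalues i) / (⨅ i, hM.eigenvalues i) else 0


set_option linter.unusedSectionVars false
set_option maxHeartbeats 1000000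

section helpers
variable {k : ℕ}

lemma psd_quad {M : Matrix (Fin k) (Fin k) ℝ} (h : M.PosSemidef) (x : Fin k → ℝ) :
    0 ≤ x ⬝ᵥ (M *ᵥ x) := by simpa using h.dotProduct_mulVec_nonneg x

lemma real_herm_iff (M : Matrix (Fin k) (Fin k) ℝ) : M.IsHermitian ↔ Mᵀ = M := by
  rw [Matrix.IsHermitian, Matrix.conjTranspose_eq_transpose_of_trivial]

lemma dot_mulVec_left {k' : ℕ} (B : Matrix (Fin k) (Fin k') ℝ) (x : Fin k → ℝ) (w : Fin k' → ℝ) :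
    x ⬝ᵥ (B *ᵥ w) = (Bᵀ *ᵥ x) ⬝ᵥ w := by
  rw [Matrix.dotProduct_mulVec, Matrix.mulVec_transpose]

lemma dot_self_eq_sum_sq (w : Fin k → ℝ) : w ⬝ᵥ w = ∑ i, (w i)^2 := by
  simp [dotProduct, sq]

lemma quad_mono {M N : Matrix (Fin k) (Fin k) ℝ} (h : (N - M).PosSemidef) (x : Fin k → ℝ) :
    x ⬝ᵥ (M *ᵥ x) ≤ x ⬝ᵥ (N *ᵥ x) := by
  have := psd_quad h x
  rw [Matrix.sub_mulVec, dotProduct_sub] at this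
  linarith

lemma psd_smul {M : Matrix (Fin k) (Fin k) ℝ} (h : M.PosSemidef) {c : ℝ} (hc : 0 ≤ c) :
    (c • M).PosSemidef := by
  refine Matrix.PosSemidef.of_dotProduct_mulVec_nonneg ?_ ?_
  · rw [real_herm_iff, Matrix.transpose_smul, (real_herm_iff M).mp h.1]
  · intro x
    have := h.dotProduct_mulVec_nonneg x
    rw [Matrix.smul_mulVec, dotProduct_smul]
    exact smul_nonneg (by simpa using hc) this

lemma dot_self_pos {x : Fin k → ℝ} (hx : x ≠ 0) : 0 < x ⬝ᵥ x := by
  have h0 : 0 ≤ x ⬝ᵥ x := by simpa using dotProduct_star_self_nonneg x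
  rcases lt_or_eq_of_le h0 with h | h
  · exact h
  · exact absurd ((dotProduct_self_eq_zero).mp h.symm) hx

end helpers

section rayleigh
variable {k : ℕ}

-- spectral decomposition over ℝ, cleaned up
lemma real_spectral {M : Matrix (Fin k) (Fin k) ℝ} (h : M.IsHermitian) :
    M = (h.eigenvectorUnitary : Matrix (Fin k) (Fin k) ℝ) * diagonal h.eigenvalues
      * (h.eigenvectorUnitary : Matrix (Fin k) (Fin k) ℝ)ᵀ := by
  have := h.spectral_theorem
  rwa [Unitary.conjStarAlgAut_apply, Matrix.star_eq_conjTranspose,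
    Matrix.conjTranspose_eq_transpose_of_trivial,
    show (RCLike.ofReal ∘ h.eigenvalues : Fin k → ℝ) = h.eigenvalues from rfl] at this

lemma unit_tQ {M : Matrix (Fin k) (Fin k) ℝ} (h : M.IsHermitian) :
    ((h.eigenvectorUnitary : Matrix (Fin k) (Fin k) ℝ))ᵀ *
      (h.eigenvectorUnitary : Matrix (Fin k) (Fin k) ℝ) = 1 := by
  have := (Matrix.mem_unitaryGroup_iff').mp h.eigenvectorUnitary.2
  rwa [Matrix.star_eq_conjTranspose, Matrix.conjTranspose_eq_transpose_of_trivial] at this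

lemma unit_Qt {M : Matrix (Fin k) (Fin k) ℝ} (h : M.IsHermitian) :
    (h.eigenvectorUnitary : Matrix (Fin k) (Fin k) ℝ) *
      ((h.eigenvectorUnitary : Matrix (Fin k) (Fin k) ℝ))ᵀ = 1 := by
  have := (Matrix.mem_unitaryGroup_iff).mp h.eigenvectorUnitary.2
  rwa [Matrix.star_eq_conjTranspose, Matrix.conjTranspose_eq_transpose_of_trivial] at this

lemma mulVec_dot {k' : ℕ} (B : Matrix (Fin k) (Fin k') ℝ) (x : Fin k' → ℝ) (y : Fin k → ℝ) :
    (B *ᵥ x) ⬝ᵥ y = x ⬝ᵥ (Bᵀ *ᵥ y) := by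
  rw [dotProduct_comm, dot_mulVec_left, dotProduct_comm]


lemma quad_diag (d : Fin k → ℝ) (w : Fin k → ℝ) :
    w ⬝ᵥ (diagonal d *ᵥ w) = ∑ i, d i * (w i)^2 := by
  simp [dotProduct, Matrix.mulVec_diagonal]
  exact Finset.sum_congr rfl fun i _ => by ring

lemma quad_diag_ge (d : Fin k → ℝ) (lb : ℝ) (hlb : ∀ i, lb ≤ d i) (w : Fin k → ℝ) :
    lb * (w ⬝ᵥ w) ≤ w ⬝ᵥ (diagonal d *ᵥ w) := by
  rw [quad_diag, dot_self_eq_sum_sq, Finset.mul_sum]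
  exact Finset.sum_le_sum fun i _ => mul_le_mul_of_nonneg_right (hlb i) (sq_nonneg _)

variable [NeZero k]

lemma quad_le_sup {M : Matrix (Fin k) (Fin k) ℝ} (h : M.IsHermitian) (x : Fin k → ℝ) :
    (⨅ i, h.eigenvalues i) * (x ⬝ᵥ x) ≤ x ⬝ᵥ (M *ᵥ x) ∧
      x ⬝ᵥ (M *ᵥ x) ≤ (⨆ i, h.eigenvalues i) * (x ⬝ᵥ x) := by
  set Q : Matrix (Fin k) (Fin k) ℝ := (h.eigenvectorUnitary : Matrix (Fin k) (Fin k) ℝ) with hQ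
  set w := Qᵀ *ᵥ x with hw
  have hXM : x ⬝ᵥ (M *ᵥ x) = ∑ i, h.eigenvalues i * (w i)^2 := by
    conv_lhs => rw [real_spectral h]
    rw [← hQ, ← Matrix.mulVec_mulVec, ← Matrix.mulVec_mulVec, dot_mulVec_left, ← hw, quad_diag]
  have hXX : x ⬝ᵥ x = ∑ i, (w i)^2 := by
    have : w ⬝ᵥ w = x ⬝ᵥ ((Q * Qᵀ) *ᵥ x) := by
      conv_lhs => rw [hw, mulVec_dot, Matrix.transpose_transpose, Matrix.mulVec_mulVec]
    rw [unit_Qt h] at this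
    simp only [Matrix.one_mulVec] at this
    rw [← this]
    simp [dotProduct]
    exact Finset.sum_congr rfl fun i _ => by ring
  have hbdd : BddAbove (Set.range h.eigenvalues) := Set.Finite.bddAbove (Set.finite_range _)
  have hbdd' : BddBelow (Set.range h.eigenvalues) := Set.Finite.bddBelow (Set.finite_range _)
  constructor
  · rw [hXM, hXX, Finset.mul_sum]
    apply Finset.sum_le_sum
    intro i _
    exact mul_le_mul_of_nonneg_right (ciInf_le hbdd' i) (sq_nonneg _)
  · rw [hXM, hXX, Finset.mul_sum]
    apply Finset.sum_le_sum
    intro i _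
    exact mul_le_mul_of_nonneg_right (le_ciSup hbdd i) (sq_nonneg _)

lemma exists_eig_vec {M : Matrix (Fin k) (Fin k) ℝ} (h : M.IsHermitian) (i : Fin k) :
    ∃ x : Fin k → ℝ, x ⬝ᵥ x = 1 ∧ x ⬝ᵥ (M *ᵥ x) = h.eigenvalues i := by
  set Q : Matrix (Fin k) (Fin k) ℝ := (h.eigenvectorUnitary : Matrix (Fin k) (Fin k) ℝ) with hQ
  refine ⟨Q *ᵥ Pi.single i 1, ?_, ?_⟩
  · have : (Q *ᵥ Pi.single i 1) ⬝ᵥ (Q *ᵥ Pi.single i 1)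
        = (Pi.single i 1 : Fin k → ℝ) ⬝ᵥ ((Qᵀ * Q) *ᵥ Pi.single i 1) := by
      rw [mulVec_dot, Matrix.mulVec_mulVec]
    rw [this, unit_tQ h]
    simp
  · have : (Q *ᵥ Pi.single i 1) ⬝ᵥ (M *ᵥ (Q *ᵥ Pi.single i 1))
        = (Pi.single i 1 : Fin k → ℝ) ⬝ᵥ ((Qᵀ * M * Q) *ᵥ Pi.single i 1) := by
      rw [mulVec_dot, Matrix.mulVec_mulVec, Matrix.mulVec_mulVec]
    rw [this]
    have hdiag : Qᵀ * M * Q = diagonal h.eigenvalues := by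
      conv_lhs => rw [real_spectral h, ← hQ]
      rw [show Qᵀ * (Q * diagonal h.eigenvalues * Qᵀ) * Q
          = (Qᵀ * Q) * diagonal h.eigenvalues * (Qᵀ * Q) from by
        simp only [Matrix.mul_assoc], unit_tQ h, Matrix.one_mul, Matrix.mul_one]
    rw [hdiag, quad_diag]
    simp [Pi.single_apply]

lemma exists_max_eig {M : Matrix (Fin k) (Fin k) ℝ} (h : M.IsHermitian) :
    ∃ x : Fin k → ℝ, x ⬝ᵥ x = 1 ∧ x ⬝ᵥ (M *ᵥ x) = ⨆ i, h.eigenvalues i := by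
  obtain ⟨i0, hi0⟩ := Finite.exists_max h.eigenvalues
  have : (⨆ i, h.eigenvalues i) = h.eigenvalues i0 := by
    apply le_antisymm
    · exact ciSup_le hi0
    · exact le_ciSup (Set.Finite.bddAbove (Set.finite_range _)) i0
  rw [this]; exact exists_eig_vec h i0

lemma exists_min_eig {M : Matrix (Fin k) (Fin k) ℝ} (h : M.IsHermitian) :
    ∃ x : Fin k → ℝ, x ⬝ᵥ x = 1 ∧ x ⬝ᵥ (M *ᵥ x) = ⨅ i, h.eigenvalues i := by
  obtain ⟨i0, hi0⟩ := Finite.exists_min h.eigenvalues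
  have : (⨅ i, h.eigenvalues i) = h.eigenvalues i0 := by
    apply le_antisymm
    · exact ciInf_le (Set.Finite.bddBelow (Set.finite_range _)) i0
    · exact le_ciInf hi0
  rw [this]; exact exists_eig_vec h i0

end rayleigh

lemma matSqrt_spec {k : ℕ} {M : Matrix (Fin k) (Fin k) ℝ} (hM : M.PosSemidef) :
    matSqrt M * matSqrt M = M ∧ (matSqrt M).PosSemidef := by
  set Q : Matrix (Fin k) (Fin k) ℝ := (hM.1.eigenvectorUnitary : Matrix (Fin k) (Fin k) ℝ)
    with hQ
  have hS : matSqrt M = Q * diagonal (fun i => √(hM.1.eigenvalues i)) * Qᵀ := by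
    rw [matSqrt, dif_pos hM, Matrix.star_eq_conjTranspose,
      Matrix.conjTranspose_eq_transpose_of_trivial]
    rfl
  have hD : diagonal (fun i => √(hM.1.eigenvalues i)) * diagonal (fun i => √(hM.1.eigenvalues i))
      = diagonal hM.1.eigenvalues := by
    rw [Matrix.diagonal_mul_diagonal]
    congr 1
    funext i
    exact Real.mul_self_sqrt (hM.eigenvalues_nonneg i)
  constructor
  · rw [hS]
    calc Q * diagonal (fun i => √(hM.1.eigenvalues i)) * Qᵀ *
          (Q * diagonal (fun i => √(hM.1.eigenvalues i)) * Qᵀ)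
        = Q * (diagonal (fun i => √(hM.1.eigenvalues i)) * (Qᵀ * Q)
          * diagonal (fun i => √(hM.1.eigenvalues i))) * Qᵀ := by simp only [Matrix.mul_assoc]
      _ = M := by rw [unit_tQ hM.1, Matrix.mul_one, hD, hQ, ← real_spectral hM.1]
  · rw [hS]
    have := (Matrix.posSemidef_diagonal_iff.mpr
      (fun i => Real.sqrt_nonneg (hM.1.eigenvalues i))).mul_mul_conjTranspose_same Q
    rwa [Matrix.conjTranspose_eq_transpose_of_trivial] at this
section pinvsec
variable {m : ℕ}

lemma exists_mp (S : Matrix (Fin m) (Fin m) ℝ) (hS : S.IsHermitian) :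
    ∃ B : Matrix (Fin m) (Fin m) ℝ,
      S * B * S = S ∧ B * S * B = B ∧ (S * B)ᵀ = S * B ∧ (B * S)ᵀ = B * S := by
  set Q : Matrix (Fin m) (Fin m) ℝ := (hS.eigenvectorUnitary : Matrix (Fin m) (Fin m) ℝ) with hQ
  have htQ : Qᵀ * Q = 1 := unit_tQ hS
  set e := hS.eigenvalues with he
  have key : ∀ d d' : Fin m → ℝ,
      (Q * diagonal d * Qᵀ) * (Q * diagonal d' * Qᵀ) = Q * diagonal (fun i => d i * d' i) * Qᵀ := by
    intro d d'
    calc (Q * diagonal d * Qᵀ) * (Q * diagonal d' * Qᵀ)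
        = Q * (diagonal d * ((Qᵀ * Q) * (diagonal d' * Qᵀ))) := by simp only [Matrix.mul_assoc]
      _ = Q * diagonal (fun i => d i * d' i) * Qᵀ := by
          rw [htQ, Matrix.one_mul]
          simp only [← Matrix.mul_assoc]
          rw [Matrix.mul_assoc Q (diagonal d) (diagonal d'), Matrix.diagonal_mul_diagonal]
  have hsymm : ∀ d : Fin m → ℝ, (Q * diagonal d * Qᵀ)ᵀ = Q * diagonal d * Qᵀ := by
    intro d
    rw [Matrix.transpose_mul, Matrix.transpose_mul, Matrix.transpose_transpose,
      Matrix.diagonal_transpose, Matrix.mul_assoc]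
  have hSd : S = Q * diagonal e * Qᵀ := real_spectral hS
  refine ⟨Q * diagonal (fun i => (e i)⁻¹) * Qᵀ, ?_, ?_, ?_, ?_⟩
  · rw [hSd, key, key]
    have : (fun i => e i * (e i)⁻¹ * e i) = e := by
      funext i
      rcases eq_or_ne (e i) 0 with h | h <;> field_simp [h]
    rw [this]
  · rw [hSd, key, key]
    have : (fun i => (e i)⁻¹ * e i * (e i)⁻¹) = fun i => (e i)⁻¹ := by
      funext i
      rcases eq_or_ne (e i) 0 with h | h <;> field_simp [h]
    rw [this]
  · rw [hSd, key, hsymm]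
  · rw [hSd, key, hsymm]

lemma mp_unique (S B C : Matrix (Fin m) (Fin m) ℝ)
    (hB : S * B * S = S ∧ B * S * B = B ∧ (S * B)ᵀ = S * B ∧ (B * S)ᵀ = B * S)
    (hC : S * C * S = S ∧ C * S * C = C ∧ (S * C)ᵀ = S * C ∧ (C * S)ᵀ = C * S) :
    B = C := by
  obtain ⟨hB1, hB2, hB3, hB4⟩ := hB
  obtain ⟨hC1, hC2, hC3, hC4⟩ := hC
  have h1 : S * B = S * C := by
    calc S * B = (S * B)ᵀ := hB3.symm
      _ = Bᵀ * Sᵀ := by rw [Matrix.transpose_mul]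
      _ = Bᵀ * (S * C * S)ᵀ := by rw [hC1]
      _ = Bᵀ * (Sᵀ * (S * C)ᵀ) := by rw [Matrix.transpose_mul (S * C) S]
      _ = (Bᵀ * Sᵀ) * (S * C)ᵀ := by rw [Matrix.mul_assoc]
      _ = (S * B)ᵀ * (S * C)ᵀ := by rw [Matrix.transpose_mul S B]
      _ = (S * B) * (S * C) := by rw [hB3, hC3]
      _ = (S * B * S) * C := by simp only [Matrix.mul_assoc]
      _ = S * C := by rw [hB1]
  have h2 : B * S = C * S := by
    calc B * S = (B * S)ᵀ := hB4.symm
      _ = Sᵀ * Bᵀ := by rw [Matrix.transpose_mul]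
      _ = (S * C * S)ᵀ * Bᵀ := by rw [hC1]
      _ = (Sᵀ * (S * C)ᵀ) * Bᵀ := by rw [Matrix.transpose_mul (S * C) S]
      _ = ((C * S)ᵀ * Sᵀ)ᵀᵀ * Bᵀ := by
            rw [Matrix.transpose_transpose, Matrix.transpose_mul S C, Matrix.transpose_mul C S]
            simp only [Matrix.mul_assoc, Matrix.transpose_transpose]
      _ = ((C * S)ᵀ * (B * S)ᵀᵀᵀ) := by
            rw [Matrix.transpose_transpose, Matrix.transpose_transpose, Matrix.transpose_mul B S]
            simp only [Matrix.mul_assoc]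
      _ = (C * S) * (B * S) := by rw [Matrix.transpose_transpose, hB4, hC4]
      _ = C * (S * B * S) := by simp only [Matrix.mul_assoc]
      _ = C * S := by rw [hB1]
  calc B = B * S * B := hB2.symm
    _ = C * S * B := by rw [h2]
    _ = C * (S * B) := by rw [Matrix.mul_assoc]
    _ = C * (S * C) := by rw [h1]
    _ = C * S * C := by rw [Matrix.mul_assoc]
    _ = C := hC2

lemma pinv_spec (S : Matrix (Fin m) (Fin m) ℝ) (hS : S.IsHermitian) :
    S * pinv S * S = S ∧ pinv S * S * pinv S = pinv S ∧
      (S * pinv S)ᵀ = S * pinv S ∧ (pinv S * S)ᵀ = pinv S * S := by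
  have hex := exists_mp S hS
  rw [pinv, dif_pos hex]
  exact hex.choose_spec

lemma pinv_symm (S : Matrix (Fin m) (Fin m) ℝ) (hS : S.IsHermitian) :
    (pinv S)ᵀ = pinv S := by
  have hSt : Sᵀ = S := (real_herm_iff S).mp hS
  obtain ⟨h1, h2, h3, h4⟩ := pinv_spec S hS
  set B := pinv S with hB
  have e3 : S * Bᵀ = B * S := by
    calc S * Bᵀ = Sᵀ * Bᵀ := by rw [hSt]
      _ = (B * S)ᵀ := (Matrix.transpose_mul B S).symm
      _ = B * S := h4
  have e4 : Bᵀ * S = S * B := by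
    calc Bᵀ * S = Bᵀ * Sᵀ := by rw [hSt]
      _ = (S * B)ᵀ := (Matrix.transpose_mul S B).symm
      _ = S * B := h3
  refine mp_unique S Bᵀ B ⟨?_, ?_, ?_, ?_⟩ ⟨h1, h2, h3, h4⟩
  · have := congrArg Matrix.transpose h1
    calc S * Bᵀ * S = (S * B * S)ᵀ := by
          rw [Matrix.transpose_mul (S * B) S, Matrix.transpose_mul S B, hSt]
          simp only [Matrix.mul_assoc]
      _ = Sᵀ := by rw [h1]
      _ = S := hSt
  · calc Bᵀ * S * Bᵀ = (B * S * B)ᵀ := by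
          rw [Matrix.transpose_mul (B * S) B, Matrix.transpose_mul B S, hSt]
          simp only [Matrix.mul_assoc]
      _ = Bᵀ := by rw [h2]
  · calc (S * Bᵀ)ᵀ = B * Sᵀ := by rw [Matrix.transpose_mul, Matrix.transpose_transpose]
      _ = B * S := by rw [hSt]
      _ = S * Bᵀ := e3.symm
  · calc (Bᵀ * S)ᵀ = Sᵀ * B := by rw [Matrix.transpose_mul, Matrix.transpose_transpose]
      _ = S * B := by rw [hSt]
      _ = Bᵀ * S := e4.symm

end pinvsec

section nystromsec
variable {n l : ℕ}

lemma nystrom_sub_psd (A : Matrix (Fin n) (Fin n) ℝ) (hA : A.PosSemidef)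
    (X : Matrix (Fin n) (Fin l) ℝ) :
    (A - nystrom A X).PosSemidef := by
  obtain ⟨C, hCdef⟩ : ∃ C, C = matSqrt A := ⟨_, rfl⟩
  have hCC : C * C = A := by rw [hCdef]; exact (matSqrt_spec hA).1
  have hCh : C.PosSemidef := by rw [hCdef]; exact (matSqrt_spec hA).2
  have hCt : Cᵀ = C := (real_herm_iff C).mp hCh.1
  obtain ⟨Y, hY⟩ : ∃ Y, Y = C * X := ⟨_, rfl⟩
  obtain ⟨S, hSdef⟩ : ∃ S, S = Xᵀ * A * X := ⟨_, rfl⟩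
  have hSY : S = Yᵀ * Y := by
    rw [hSdef, hY, Matrix.transpose_mul, hCt, ← hCC]
    simp only [Matrix.mul_assoc]
  have hSh : S.IsHermitian := by
    rw [real_herm_iff, hSY, Matrix.transpose_mul, Matrix.transpose_transpose]
  obtain ⟨h1, h2, h3, h4⟩ := pinv_spec S hSh
  have hBt : (pinv S)ᵀ = pinv S := pinv_symm S hSh
  obtain ⟨B, hB⟩ : ∃ B, B = pinv S := ⟨_, rfl⟩
  rw [← hB] at h1 h2 h3 h4 hBt
  obtain ⟨N, hN⟩ : ∃ N, N = Y * B * Yᵀ := ⟨_, rfl⟩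
  have hNt : Nᵀ = N := by
    rw [hN, Matrix.transpose_mul (Y * B) Yᵀ, Matrix.transpose_mul Y B,
      Matrix.transpose_transpose, hBt, ← Matrix.mul_assoc]
  have hNN : N * N = N := by
    calc N * N = Y * (B * (Yᵀ * Y) * B) * Yᵀ := by rw [hN]; simp only [Matrix.mul_assoc]
      _ = Y * (B * S * B) * Yᵀ := by rw [← hSY]
      _ = N := by rw [h2, hN]
  have hNyst : nystrom A X = C * N * C := by
    have hAX : A * X = C * Y := by rw [hY, ← hCC, Matrix.mul_assoc]
    rw [nystrom, hAX, ← hSdef, ← hB, Matrix.transpose_mul, hCt]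
    calc C * Y * B * (Yᵀ * C) = C * (Y * B * Yᵀ) * C := by simp only [Matrix.mul_assoc]
      _ = C * N * C := by rw [hN]
  have hINt : (1 - N)ᵀ = 1 - N := by rw [Matrix.transpose_sub, Matrix.transpose_one, hNt]
  have hproj : (1 - N) * (1 - N) = 1 - N := by
    rw [Matrix.sub_mul, Matrix.one_mul, Matrix.mul_sub, Matrix.mul_one, hNN]
    abel
  have hIN : (1 - N).PosSemidef := by
    have := Matrix.posSemidef_conjTranspose_mul_self (1 - N)
    rwa [Matrix.conjTranspose_eq_transpose_of_trivial, hINt, hproj] at this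
  have final := hIN.mul_mul_conjTranspose_same C
  rw [Matrix.conjTranspose_eq_transpose_of_trivial, hCt] at final
  have : C * (1 - N) * C = A - nystrom A X := by
    rw [Matrix.mul_sub, Matrix.mul_one, Matrix.sub_mul, hCC, hNyst]
  rwa [this] at final

end nystromsec
section specnorm
variable {k : ℕ}

lemma quad_le_specNorm (E : Matrix (Fin k) (Fin k) ℝ) (z : Fin k → ℝ) :
    z ⬝ᵥ (E *ᵥ z) ≤ specNorm E * (z ⬝ᵥ z) := by
  set v : EuclideanSpace ℝ (Fin k) := WithLp.toLp 2 z with hv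
  set T := LinearMap.toContinuousLinearMap (Matrix.toEuclideanLin E) with hT
  have h1 : (inner ℝ v (T v) : ℝ) = z ⬝ᵥ (E *ᵥ z) := by
    rw [hT]
    simp only [LinearMap.coe_toContinuousLinearMap']
    rw [hv, Matrix.toEuclideanLin_apply_piLp_toLp, EuclideanSpace.inner_toLp_toLp]
    simp [dotProduct_comm]
  have h2 : ‖v‖ ^ 2 = z ⬝ᵥ z := by
    have : (inner ℝ v v : ℝ) = z ⬝ᵥ z := by
      rw [hv, EuclideanSpace.inner_toLp_toLp]; simp
    rw [← this, real_inner_self_eq_norm_sq]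
  have h3 : (inner ℝ v (T v) : ℝ) ≤ ‖v‖ * ‖T v‖ := real_inner_le_norm v (T v)
  have h4 : ‖T v‖ ≤ ‖T‖ * ‖v‖ := T.le_opNorm v
  have : (inner ℝ v (T v) : ℝ) ≤ ‖T‖ * ‖v‖ ^ 2 := by
    calc (inner ℝ v (T v) : ℝ) ≤ ‖v‖ * ‖T v‖ := h3
      _ ≤ ‖v‖ * (‖T‖ * ‖v‖) := by
          exact mul_le_mul_of_nonneg_left h4 (norm_nonneg v)
      _ = ‖T‖ * ‖v‖ ^ 2 := by ring
  rw [h1, h2] at this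
  exact this

lemma specNorm_nonneg (E : Matrix (Fin k) (Fin k) ℝ) : 0 ≤ specNorm E := norm_nonneg _

end specnorm
section morehelpers
variable {n l : ℕ}

lemma conj_psd (U : Matrix (Fin n) (Fin l) ℝ) {B : Matrix (Fin l) (Fin l) ℝ}
    (hB : B.PosSemidef) : (U * B * Uᵀ).PosSemidef := by
  have := hB.mul_mul_conjTranspose_same U
  rwa [Matrix.conjTranspose_eq_transpose_of_trivial] at this

lemma one_sub_proj_psd (U : Matrix (Fin n) (Fin l) ℝ) (hU : Uᵀ * U = 1) :
    ((1 : Matrix (Fin n) (Fin n) ℝ) - U * Uᵀ).PosSemidef := by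
  have hINt : ((1 : Matrix (Fin n) (Fin n) ℝ) - U * Uᵀ)ᵀ = 1 - U * Uᵀ := by
    rw [Matrix.transpose_sub, Matrix.transpose_one, Matrix.transpose_mul,
      Matrix.transpose_transpose]
  have hUU : (U * Uᵀ) * (U * Uᵀ) = U * Uᵀ := by
    calc (U * Uᵀ) * (U * Uᵀ) = U * ((Uᵀ * U) * Uᵀ) := by simp only [Matrix.mul_assoc]
      _ = U * Uᵀ := by rw [hU, Matrix.one_mul]
  have hproj : ((1 : Matrix (Fin n) (Fin n) ℝ) - U * Uᵀ) * (1 - U * Uᵀ) = 1 - U * Uᵀ := by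
    rw [Matrix.sub_mul, Matrix.one_mul, Matrix.mul_sub, Matrix.mul_one, hUU]
    abel
  have := Matrix.posSemidef_conjTranspose_mul_self ((1 : Matrix (Fin n) (Fin n) ℝ) - U * Uᵀ)
  rwa [Matrix.conjTranspose_eq_transpose_of_trivial, hINt, hproj] at this

end morehelpers

/-- Deterministic condition-number bounds for the Nyström
preconditioner `P = (λ̂_ℓ+μ)⁻¹U(Λ̂+μI)Uᵀ + (I − UUᵀ)` built from an arbitrary
rank-`ℓ` Nyström approximation `Â = A⟨X⟩ = UΛ̂Uᵀ` (0-indexed: `λ̂_ℓ = lamhat ⟨l-1,_⟩`,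
`λ_n = lam ⟨n-1,_⟩`). -/
theorem nystrom_preconditioner_deterministic_bound {n l : ℕ}
    (hl1 : 1 ≤ l) (hln : l < n)
    (A : Matrix (Fin n) (Fin n) ℝ) (hA : A.PosSemidef)
    (lam : Fin n → ℝ) (hanti : Antitone lam)
    (V : Matrix (Fin n) (Fin n) ℝ) (hV : Vᵀ * V = 1)
    (hdecomp : A = V * Matrix.diagonal lam * Vᵀ)
    (μ : ℝ) (hμ : 0 < μ)
    (X : Matrix (Fin n) (Fin l) ℝ)
    (U : Matrix (Fin n) (Fin l) ℝ) (hU : Uᵀ * U = 1)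
    (lamhat : Fin l → ℝ) (hanti' : Antitone lamhat) (hnn : ∀ i, 0 ≤ lamhat i)
    (hAhat : nystrom A X = U * Matrix.diagonal lamhat * Uᵀ)
    (P : Matrix (Fin n) (Fin n) ℝ)
    (hP : P = (lamhat ⟨l - 1, by omega⟩ + μ)⁻¹ •
        (U * (Matrix.diagonal lamhat + μ • (1 : Matrix (Fin l) (Fin l) ℝ)) * Uᵀ)
        + ((1 : Matrix (Fin n) (Fin n) ℝ) - U * Uᵀ)) :
    max ((lamhat ⟨l - 1, by omega⟩ + μ) / (lam ⟨n - 1, by omega⟩ + μ)) 1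
      ≤ kappa ((matSqrt P)⁻¹ * (A + μ • (1 : Matrix (Fin n) (Fin n) ℝ)) * (matSqrt P)⁻¹)
    ∧ kappa ((matSqrt P)⁻¹ * (A + μ • (1 : Matrix (Fin n) (Fin n) ℝ)) * (matSqrt P)⁻¹)
      ≤ (lamhat ⟨l - 1, by omega⟩ + μ + specNorm (A - nystrom A X)) *
        min (1 / μ)
          ((lamhat ⟨l - 1, by omega⟩ + lam ⟨n - 1, by omega⟩ + 2 * μ)
            / ((lamhat ⟨l - 1, by omega⟩ + μ) * (lam ⟨n - 1, by omega⟩ + μ))) := by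
  haveI : NeZero n := ⟨by omega⟩
  have hlℓ0 : 0 ≤ lamhat ⟨l - 1, by omega⟩ := hnn _
  set lℓ : ℝ := lamhat ⟨l - 1, by omega⟩ with hlℓ_def
  set ln : ℝ := lam ⟨n - 1, by omega⟩ with hln_def
  set c : ℝ := lℓ + μ with hc_def
  have hc : 0 < c := by rw [hc_def]; linarith
  have hμc : μ ≤ c := by rw [hc_def]; linarith
  -- facts about lam
  have hVVt : V * Vᵀ = 1 := mul_eq_one_comm.mp hV
  have hlam0 : ∀ i, 0 ≤ lam i := by
    have hdiag : Vᵀ * A * V = Matrix.diagonal lam := by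
      rw [hdecomp]
      calc Vᵀ * (V * Matrix.diagonal lam * Vᵀ) * V
          = (Vᵀ * V) * Matrix.diagonal lam * (Vᵀ * V) := by simp only [Matrix.mul_assoc]
        _ = Matrix.diagonal lam := by rw [hV, Matrix.one_mul, Matrix.mul_one]
    have hpsd := hA.conjTranspose_mul_mul_same V
    rw [Matrix.conjTranspose_eq_transpose_of_trivial, hdiag] at hpsd
    exact fun i => Matrix.posSemidef_diagonal_iff.mp hpsd i
  have hln0 : 0 ≤ ln := hlam0 _
  have hlnμ : 0 < ln + μ := by linarith
  -- the Nystrom approximation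
  obtain ⟨Ah, hAh⟩ : ∃ Ah, Ah = U * Matrix.diagonal lamhat * Uᵀ := ⟨_, rfl⟩
  have hE : (A - Ah).PosSemidef := by rw [hAh, ← hAhat]; exact nystrom_sub_psd A hA X
  have hspecE0 : 0 ≤ specNorm (A - Ah) := specNorm_nonneg _
  -- quadratic form expansions
  have hUconj : ∀ (B : Matrix (Fin l) (Fin l) ℝ) (z : Fin n → ℝ),
      z ⬝ᵥ ((U * B * Uᵀ) *ᵥ z) = (Uᵀ *ᵥ z) ⬝ᵥ (B *ᵥ (Uᵀ *ᵥ z)) := by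
    intro B z
    rw [← Matrix.mulVec_mulVec, ← Matrix.mulVec_mulVec, dot_mulVec_left]
  have hUUdot : ∀ z : Fin n → ℝ, z ⬝ᵥ ((U * Uᵀ) *ᵥ z) = (Uᵀ *ᵥ z) ⬝ᵥ (Uᵀ *ᵥ z) := by
    intro z; rw [← Matrix.mulVec_mulVec, dot_mulVec_left]
  have hqform : ∀ z : Fin n → ℝ, z ⬝ᵥ ((A + μ • (1 : Matrix (Fin n) (Fin n) ℝ)) *ᵥ z)
      = (Uᵀ *ᵥ z) ⬝ᵥ (Matrix.diagonal lamhat *ᵥ (Uᵀ *ᵥ z)) + z ⬝ᵥ ((A - Ah) *ᵥ z)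
        + μ * (z ⬝ᵥ z) := by
    intro z
    have h1 : z ⬝ᵥ (A *ᵥ z) = z ⬝ᵥ (Ah *ᵥ z) + z ⬝ᵥ ((A - Ah) *ᵥ z) := by
      rw [Matrix.sub_mulVec, dotProduct_sub]; ring
    rw [Matrix.add_mulVec, Matrix.smul_mulVec, Matrix.one_mulVec, dotProduct_add,
      dotProduct_smul, h1, hAh, hUconj]
    simp [smul_eq_mul]
  have hpform : ∀ z : Fin n → ℝ, z ⬝ᵥ (P *ᵥ z)
      = c⁻¹ * ((Uᵀ *ᵥ z) ⬝ᵥ (Matrix.diagonal lamhat *ᵥ (Uᵀ *ᵥ z))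
          + μ * ((Uᵀ *ᵥ z) ⬝ᵥ (Uᵀ *ᵥ z)))
        + (z ⬝ᵥ z - (Uᵀ *ᵥ z) ⬝ᵥ (Uᵀ *ᵥ z)) := by
    intro z
    have hinner : z ⬝ᵥ ((U * (Matrix.diagonal lamhat + μ • (1 : Matrix (Fin l) (Fin l) ℝ)) * Uᵀ) *ᵥ z)
        = (Uᵀ *ᵥ z) ⬝ᵥ (Matrix.diagonal lamhat *ᵥ (Uᵀ *ᵥ z))
          + μ * ((Uᵀ *ᵥ z) ⬝ᵥ (Uᵀ *ᵥ z)) := by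
      rw [hUconj, Matrix.add_mulVec, Matrix.smul_mulVec, Matrix.one_mulVec,
        dotProduct_add, dotProduct_smul]
      simp [smul_eq_mul]
    rw [hP, Matrix.add_mulVec, Matrix.smul_mulVec, Matrix.sub_mulVec, Matrix.one_mulVec,
      dotProduct_add, dotProduct_smul, dotProduct_sub, hUUdot, hinner]
    simp [smul_eq_mul]
  -- key scalar facts for every z
  have hUU1 : ((1 : Matrix (Fin n) (Fin n) ℝ) - U * Uᵀ).PosSemidef := one_sub_proj_psd U hU
  have hAln : (A - ln • (1 : Matrix (Fin n) (Fin n) ℝ)).PosSemidef := by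
    have hid : A - ln • (1 : Matrix (Fin n) (Fin n) ℝ)
        = V * Matrix.diagonal (fun i => lam i - ln) * Vᵀ := by
      have h1 : ln • (1 : Matrix (Fin n) (Fin n) ℝ)
          = V * (ln • (1 : Matrix (Fin n) (Fin n) ℝ)) * Vᵀ := by
        rw [Matrix.mul_smul, Matrix.mul_one, Matrix.smul_mul, hVVt]
      rw [hdecomp, h1, ← Matrix.sub_mul, ← Matrix.mul_sub]
      congr 2
      rw [Matrix.smul_one_eq_diagonal, ← Matrix.diagonal_sub]
    rw [hid]
    refine conj_psd V (Matrix.posSemidef_diagonal_iff.mpr fun i => ?_)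
    have : ln ≤ lam i := hanti (show i ≤ ⟨n - 1, by omega⟩ from by
      simp only [Fin.le_def]; omega)
    linarith
  have key : ∀ z : Fin n → ℝ,
      (z ⬝ᵥ z ≤ z ⬝ᵥ (P *ᵥ z)) ∧
      (z ⬝ᵥ ((A + μ • (1 : Matrix (Fin n) (Fin n) ℝ)) *ᵥ z)
          ≤ (c + specNorm (A - Ah)) * (z ⬝ᵥ (P *ᵥ z))) ∧
      (μ * (z ⬝ᵥ (P *ᵥ z)) ≤ z ⬝ᵥ ((A + μ • (1 : Matrix (Fin n) (Fin n) ℝ)) *ᵥ z)) ∧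
      (z ⬝ᵥ (P *ᵥ z) ≤ z ⬝ᵥ z
          + c⁻¹ * (z ⬝ᵥ ((A + μ • (1 : Matrix (Fin n) (Fin n) ℝ)) *ᵥ z))) ∧
      ((ln + μ) * (z ⬝ᵥ z) ≤ z ⬝ᵥ ((A + μ • (1 : Matrix (Fin n) (Fin n) ℝ)) *ᵥ z)) := by
    intro z
    have hq := hqform z
    have hp := hpform z
    set w : Fin l → ℝ := Uᵀ *ᵥ z with hw
    set t : ℝ := w ⬝ᵥ (Matrix.diagonal lamhat *ᵥ w) with ht
    set s : ℝ := w ⬝ᵥ w with hs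
    set r : ℝ := z ⬝ᵥ z with hr
    set ε : ℝ := z ⬝ᵥ ((A - Ah) *ᵥ z) with hε
    have hs0 : 0 ≤ s := by rw [hs, dot_self_eq_sum_sq]; positivity
    have hr0 : 0 ≤ r := by rw [hr, dot_self_eq_sum_sq]; positivity
    have hts : lℓ * s ≤ t := by
      rw [ht, hs]
      refine quad_diag_ge lamhat lℓ (fun i => ?_) w
      exact hanti' (show i ≤ ⟨l - 1, by omega⟩ from by simp only [Fin.le_def]; omega)
    have ht0 : 0 ≤ t := le_trans (by nlinarith) hts
    have hsr : s ≤ r := by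
      have h0 := psd_quad hUU1 z
      rw [Matrix.sub_mulVec, Matrix.one_mulVec, dotProduct_sub, hUUdot z] at h0
      rw [hs, hr, hw]; linarith
    have hε0 : 0 ≤ ε := psd_quad hE z
    have hεr : ε ≤ specNorm (A - Ah) * r := by
      rw [hε, hr]; exact quad_le_specNorm _ z
    have hAzl : ln * r ≤ z ⬝ᵥ (A *ᵥ z) := by
      have h0 := psd_quad hAln z
      rw [Matrix.sub_mulVec, Matrix.smul_mulVec, Matrix.one_mulVec, dotProduct_sub,
        dotProduct_smul] at h0
      rw [hr]
      simp only [smul_eq_mul] at h0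
      linarith
    have hqz : z ⬝ᵥ ((A + μ • (1 : Matrix (Fin n) (Fin n) ℝ)) *ᵥ z) = t + ε + μ * r := hq
    have hAz : z ⬝ᵥ (A *ᵥ z) = t + ε := by
      have h1 : z ⬝ᵥ (A *ᵥ z) + μ * r = t + ε + μ * r := by
        rw [← hqz, Matrix.add_mulVec, Matrix.smul_mulVec, Matrix.one_mulVec,
          dotProduct_add, dotProduct_smul, hr]
        simp [smul_eq_mul]
      linarith
    have hpz : z ⬝ᵥ (P *ᵥ z) = c⁻¹ * (t + μ * s) + (r - s) := by rw [hp]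
    have hcinv : c⁻¹ * c = 1 := inv_mul_cancel₀ (ne_of_gt hc)
    have hrp : r ≤ z ⬝ᵥ (P *ᵥ z) := by
      rw [hpz]
      have h1 : c * s ≤ t + μ * s := by rw [hc_def] at *; nlinarith
      have h2 := mul_le_mul_of_nonneg_left h1 (inv_nonneg.mpr hc.le)
      have h3 : c⁻¹ * (c * s) = s := by rw [← mul_assoc, hcinv, one_mul]
      linarith
    refine ⟨hrp, ?_, ?_, ?_, ?_⟩
    · -- q ≤ (c + specE) * p
      have hcp : c * (z ⬝ᵥ (P *ᵥ z)) = (t + μ * s) + c * (r - s) := by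
        rw [hpz, mul_add, ← mul_assoc, mul_inv_cancel₀ (ne_of_gt hc), one_mul]
      have h1 : ε ≤ specNorm (A - Ah) * (z ⬝ᵥ (P *ᵥ z)) :=
        le_trans hεr (mul_le_mul_of_nonneg_left hrp hspecE0)
      have h2 : t + μ * r ≤ c * (z ⬝ᵥ (P *ᵥ z)) := by
        rw [hcp]; nlinarith
      rw [hqz, add_mul]
      linarith
    · -- μ p ≤ q
      rw [hqz, hpz]
      have h1 : μ * (c⁻¹ * (t + μ * s)) ≤ t + μ * s := by
        have h2 : μ * c⁻¹ ≤ 1 := by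
          rw [← mul_inv_cancel₀ (ne_of_gt hc)]
          exact mul_le_mul_of_nonneg_right hμc (inv_nonneg.mpr hc.le)
        have h3 : 0 ≤ t + μ * s := by nlinarith
        calc μ * (c⁻¹ * (t + μ * s)) = (μ * c⁻¹) * (t + μ * s) := by ring
          _ ≤ 1 * (t + μ * s) := mul_le_mul_of_nonneg_right h2 h3
          _ = t + μ * s := by ring
      calc μ * (c⁻¹ * (t + μ * s) + (r - s))
          = μ * (c⁻¹ * (t + μ * s)) + (μ * r - μ * s) := by ring
        _ ≤ (t + μ * s) + (μ * r - μ * s) := by linarith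
        _ = t + μ * r := by ring
        _ ≤ t + ε + μ * r := by linarith
    · -- p ≤ r + c⁻¹ q
      rw [hqz, hpz]
      have h1 : c⁻¹ * (t + μ * s) - s ≤ c⁻¹ * t := by
        have h2 : c⁻¹ * (t + μ * s) - c⁻¹ * (c * s) ≤ c⁻¹ * t := by
          rw [← mul_sub]
          refine mul_le_mul_of_nonneg_left ?_ (inv_nonneg.mpr hc.le)
          rw [hc_def]; nlinarith
        have h3 : c⁻¹ * (c * s) = s := by rw [← mul_assoc, hcinv, one_mul]
        linarith
      have h4 : c⁻¹ * t ≤ c⁻¹ * (t + ε + μ * r) := by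
        refine mul_le_mul_of_nonneg_left ?_ (inv_nonneg.mpr hc.le)
        nlinarith
      linarith
    · -- (ln+μ) r ≤ q
      rw [hqz]
      have : z ⬝ᵥ (A *ᵥ z) = t + ε := hAz
      nlinarith
  -- positive definiteness of P and its square root
  have hPsymm : P.IsHermitian := by
    rw [real_herm_iff, hP]
    rw [Matrix.transpose_add, Matrix.transpose_smul, Matrix.transpose_sub, Matrix.transpose_one,
      Matrix.transpose_mul, Matrix.transpose_mul, Matrix.transpose_transpose,
      Matrix.transpose_mul, Matrix.transpose_transpose]
    have hD : (Matrix.diagonal lamhat + μ • (1 : Matrix (Fin l) (Fin l) ℝ))ᵀ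
        = Matrix.diagonal lamhat + μ • (1 : Matrix (Fin l) (Fin l) ℝ) := by
      rw [Matrix.transpose_add, Matrix.transpose_smul, Matrix.transpose_one,
        Matrix.diagonal_transpose]
    rw [hD, Matrix.mul_assoc]
  have hPpsd : P.PosSemidef := by
    refine Matrix.PosSemidef.of_dotProduct_mulVec_nonneg hPsymm fun z => ?_
    have h1 := (key z).1
    have h2 : 0 ≤ z ⬝ᵥ z := by rw [dot_self_eq_sum_sq]; positivity
    simpa using le_trans h2 h1
  have hPpd : P.PosDef := by
    refine Matrix.PosDef.of_dotProduct_mulVec_pos hPsymm fun z hz => ?_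
    have h1 := (key z).1
    have h2 : 0 < z ⬝ᵥ z := dot_self_pos hz
    simpa using lt_of_lt_of_le h2 h1
  obtain ⟨Sq, hSq⟩ : ∃ Sq, Sq = matSqrt P := ⟨_, rfl⟩
  have hSqSq : Sq * Sq = P := by rw [hSq]; exact (matSqrt_spec hPpsd).1
  have hSqt : Sqᵀ = Sq := by
    rw [hSq]; exact (real_herm_iff _).mp (matSqrt_spec hPpsd).2.1
  have hdet : IsUnit Sq.det := by
    rw [isUnit_iff_ne_zero]
    intro h0
    have h1 : Sq.det * Sq.det = P.det := by rw [← Matrix.det_mul, hSqSq]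
    have h2 := hPpd.det_pos
    rw [h0, mul_zero] at h1
    rw [← h1] at h2
    exact lt_irrefl _ h2
  have hSS : Sq * Sq⁻¹ = 1 := Matrix.mul_nonsing_inv _ hdet
  have hSS' : Sq⁻¹ * Sq = 1 := Matrix.nonsing_inv_mul _ hdet
  have hSqinvt : (Sq⁻¹)ᵀ = Sq⁻¹ := by rw [Matrix.transpose_nonsing_inv, hSqt]
  rw [← hSq]
  obtain ⟨M, hM⟩ : ∃ M, M = Sq⁻¹ * (A + μ • (1 : Matrix (Fin n) (Fin n) ℝ)) * Sq⁻¹ := ⟨_, rfl⟩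
  rw [← hM]
  have hAμt : (A + μ • (1 : Matrix (Fin n) (Fin n) ℝ))ᵀ = A + μ • (1 : Matrix (Fin n) (Fin n) ℝ) := by
    rw [Matrix.transpose_add, Matrix.transpose_smul, Matrix.transpose_one,
      (real_herm_iff A).mp hA.1]
  have hMherm : M.IsHermitian := by
    rw [real_herm_iff, hM, Matrix.transpose_mul, Matrix.transpose_mul, hSqinvt, hAμt,
      Matrix.mul_assoc]
  -- translation between quadratic forms of M and (q, p)
  have htrans : ∀ x : Fin n → ℝ,
      x ⬝ᵥ (M *ᵥ x) = (Sq⁻¹ *ᵥ x) ⬝ᵥ ((A + μ • (1 : Matrix (Fin n) (Fin n) ℝ)) *ᵥ (Sq⁻¹ *ᵥ x))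
      ∧ x ⬝ᵥ x = (Sq⁻¹ *ᵥ x) ⬝ᵥ (P *ᵥ (Sq⁻¹ *ᵥ x)) := by
    intro x
    constructor
    · rw [hM, ← Matrix.mulVec_mulVec, ← Matrix.mulVec_mulVec, dot_mulVec_left, hSqinvt]
    · have hx : Sq *ᵥ (Sq⁻¹ *ᵥ x) = x := by
        rw [Matrix.mulVec_mulVec, hSS, Matrix.one_mulVec]
      conv_lhs => rw [← hx]
      rw [mulVec_dot, hSqt, Matrix.mulVec_mulVec, hSqSq]
  -- eigenvalue bounds
  set a : ℝ := ⨆ i, hMherm.eigenvalues i with ha_def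
  set b : ℝ := ⨅ i, hMherm.eigenvalues i with hb_def
  have hbμ : μ ≤ b := by
    obtain ⟨x0, hx0n, hx0v⟩ := exists_min_eig hMherm
    have h1 := (htrans x0).1
    have h2 := (htrans x0).2
    have h3 := (key (Sq⁻¹ *ᵥ x0)).2.2.1
    rw [← h1, hx0v, ← h2, hx0n, mul_one] at h3
    exact h3
  have hb0 : 0 < b := lt_of_lt_of_le hμ hbμ
  have hac : a ≤ c + specNorm (A - Ah) := by
    obtain ⟨x0, hx0n, hx0v⟩ := exists_max_eig hMherm
    have h1 := (htrans x0).1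
    have h2 := (htrans x0).2
    have h3 := (key (Sq⁻¹ *ᵥ x0)).2.1
    rw [← h1, hx0v, ← h2, hx0n, mul_one] at h3
    exact h3
  -- β bound : β := c * (ln + μ) / (c + ln + μ)
  have hβb : c * (ln + μ) / (c + ln + μ) ≤ b := by
    obtain ⟨x0, hx0n, hx0v⟩ := exists_min_eig hMherm
    have h1 := (htrans x0).1
    have h2 := (htrans x0).2
    set z := Sq⁻¹ *ᵥ x0 with hz
    have h4 := (key z).2.2.2.1
    have h5 := (key z).2.2.2.2
    have hqz0 : 0 ≤ z ⬝ᵥ ((A + μ • (1 : Matrix (Fin n) (Fin n) ℝ)) *ᵥ z) := by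
      have := (key z).2.2.1
      have hpz0 : 0 ≤ z ⬝ᵥ (P *ᵥ z) := by
        rw [← h2, hx0n]; norm_num
      nlinarith
    have hpz1 : z ⬝ᵥ (P *ᵥ z) = 1 := by rw [← h2, hx0n]
    have hbz : b = z ⬝ᵥ ((A + μ • (1 : Matrix (Fin n) (Fin n) ℝ)) *ᵥ z) := by
      rw [← h1, hx0v]
    rw [hbz]
    rw [hpz1] at h4
    -- h4 : 1 ≤ z⬝ᵥz + c⁻¹ * q ; h5 : (ln+μ) * z⬝ᵥz ≤ q
    set q := z ⬝ᵥ ((A + μ • (1 : Matrix (Fin n) (Fin n) ℝ)) *ᵥ z)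
    rw [div_le_iff₀ (by linarith)]
    have h6 : z ⬝ᵥ z ≤ q / (ln + μ) := by
      rw [le_div_iff₀ hlnμ]; nlinarith
    have h7 : (1 : ℝ) ≤ q / (ln + μ) + c⁻¹ * q := by linarith
    have h8 : c * (ln + μ) * 1 ≤ c * (ln + μ) * (q / (ln + μ) + c⁻¹ * q) := by
      refine mul_le_mul_of_nonneg_left h7 ?_
      positivity
    calc c * (ln + μ) = c * (ln + μ) * 1 := by ring
      _ ≤ c * (ln + μ) * (q / (ln + μ) + c⁻¹ * q) := h8
      _ = q * (c + (ln + μ)) := by field_simp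
      _ = q * (c + ln + μ) := by ring
  have hca : c ≤ a := by
    set e : Fin l → ℝ := Pi.single ⟨l - 1, by omega⟩ 1 with he
    set z1 : Fin n → ℝ := U *ᵥ e with hz1
    have hw1 : Uᵀ *ᵥ z1 = e := by
      rw [hz1, Matrix.mulVec_mulVec, hU, Matrix.one_mulVec]
    have hee : e ⬝ᵥ e = 1 := by
      rw [he, dot_self_eq_sum_sq]
      simp [Pi.single_apply]
    have hr1 : z1 ⬝ᵥ z1 = 1 := by
      calc z1 ⬝ᵥ z1 = (U *ᵥ e) ⬝ᵥ z1 := by rw [hz1]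
        _ = e ⬝ᵥ (Uᵀ *ᵥ z1) := mulVec_dot U e z1
        _ = e ⬝ᵥ e := by rw [hw1]
        _ = 1 := hee
    have ht1 : e ⬝ᵥ (Matrix.diagonal lamhat *ᵥ e) = lℓ := by
      rw [quad_diag, he]
      simp [Pi.single_apply]
      rfl
    have hp1 : z1 ⬝ᵥ (P *ᵥ z1) = 1 := by
      rw [hpform z1, hw1, ht1, hee, hr1]
      field_simp
      rw [hc_def]; ring
    have hq1 : c ≤ z1 ⬝ᵥ ((A + μ • (1 : Matrix (Fin n) (Fin n) ℝ)) *ᵥ z1) := by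
      rw [hqform z1, hw1, ht1, hr1]
      have hε1 : 0 ≤ z1 ⬝ᵥ ((A - Ah) *ᵥ z1) := psd_quad hE z1
      rw [hc_def]; linarith
    set x1 : Fin n → ℝ := Sq *ᵥ z1 with hx1
    have hzx : Sq⁻¹ *ᵥ x1 = z1 := by
      rw [hx1, Matrix.mulVec_mulVec, hSS', Matrix.one_mulVec]
    have h1 := (htrans x1).1
    have h2 := (htrans x1).2
    rw [hzx] at h1 h2
    have h3 := (quad_le_sup hMherm x1).2
    rw [h1, h2, hp1, mul_one] at h3
    exact le_trans hq1 h3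
  have hbln : b ≤ ln + μ := by
    set e : Fin n → ℝ := Pi.single ⟨n - 1, by omega⟩ 1 with he
    set z2 : Fin n → ℝ := V *ᵥ e with hz2
    have hw2 : Vᵀ *ᵥ z2 = e := by
      rw [hz2, Matrix.mulVec_mulVec, hV, Matrix.one_mulVec]
    have hee : e ⬝ᵥ e = 1 := by
      rw [he, dot_self_eq_sum_sq]
      simp [Pi.single_apply]
    have hr2 : z2 ⬝ᵥ z2 = 1 := by
      calc z2 ⬝ᵥ z2 = (V *ᵥ e) ⬝ᵥ z2 := by rw [hz2]
        _ = e ⬝ᵥ (Vᵀ *ᵥ z2) := mulVec_dot V e z2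
        _ = e ⬝ᵥ e := by rw [hw2]
        _ = 1 := hee
    have hAz2 : z2 ⬝ᵥ (A *ᵥ z2) = ln := by
      conv_lhs => rw [hdecomp]
      rw [← Matrix.mulVec_mulVec, ← Matrix.mulVec_mulVec, dot_mulVec_left, hw2, quad_diag, he]
      simp [Pi.single_apply]
      rfl
    have hq2 : z2 ⬝ᵥ ((A + μ • (1 : Matrix (Fin n) (Fin n) ℝ)) *ᵥ z2) = ln + μ := by
      rw [Matrix.add_mulVec, Matrix.smul_mulVec, Matrix.one_mulVec, dotProduct_add,
        dotProduct_smul, hAz2, hr2]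
      simp
    have hp2 : 1 ≤ z2 ⬝ᵥ (P *ᵥ z2) := by
      have := (key z2).1
      rw [hr2] at this
      exact this
    set x2 : Fin n → ℝ := Sq *ᵥ z2 with hx2
    have hzx : Sq⁻¹ *ᵥ x2 = z2 := by
      rw [hx2, Matrix.mulVec_mulVec, hSS', Matrix.one_mulVec]
    have h1 := (htrans x2).1
    have h2 := (htrans x2).2
    rw [hzx] at h1 h2
    have h3 := (quad_le_sup hMherm x2).1
    rw [h1, h2, hq2] at h3
    nlinarith [hb0]
  have hba : b ≤ a := by
    have h1 : b ≤ hMherm.eigenvalues ⟨0, by omega⟩ :=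
      ciInf_le (Set.Finite.bddBelow (Set.finite_range _)) _
    have h2 : hMherm.eigenvalues ⟨0, by omega⟩ ≤ a :=
      le_ciSup (Set.Finite.bddAbove (Set.finite_range _)) _
    linarith
  have hkappa : kappa M = a / b := by rw [kappa, dif_pos hMherm]
  have ha0 : 0 < a := lt_of_lt_of_le hb0 hba
  constructor
  · refine max_le ?_ ?_
    · rw [hkappa]
      exact div_le_div₀ ha0.le (le_trans (le_refl c) (le_trans (le_refl c) hca)) hb0 hbln
    · rw [hkappa, le_div_iff₀ hb0, one_mul]
      exact hba
  · rw [hkappa]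
    have h1 : a / b ≤ (c + specNorm (A - Ah)) * b⁻¹ := by
      rw [div_eq_mul_inv]
      exact mul_le_mul_of_nonneg_right hac (inv_nonneg.mpr hb0.le)
    have h3 : (0:ℝ) ≤ c + specNorm (A - Ah) := by linarith
    have h2 : b⁻¹ ≤ min (1/μ) ((lℓ + ln + 2*μ) / (c * (ln + μ))) := by
      refine le_min ?_ ?_
      · rw [one_div]
        exact inv_anti₀ hμ hbμ
      · have hβ : (0:ℝ) < c * (ln + μ) / (c + ln + μ) := by
          apply div_pos (mul_pos hc hlnμ)
          linarith
        have h4 : b⁻¹ ≤ (c * (ln + μ) / (c + ln + μ))⁻¹ := inv_anti₀ hβ hβb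
        have h5 : (c * (ln + μ) / (c + ln + μ))⁻¹ = (lℓ + ln + 2*μ) / (c * (ln + μ)) := by
          rw [inv_div, hc_def]
          congr 1
          ring
        rw [← h5]
        exact h4
    have hgoal : specNorm (A - nystrom A X) = specNorm (A - Ah) := by rw [hAhat, hAh]
    rw [hgoal]
    calc a / b ≤ (c + specNorm (A - Ah)) * b⁻¹ := h1
      _ ≤ (c + specNorm (A - Ah)) * min (1/μ) ((lℓ + ln + 2*μ) / (c * (ln + μ))) :=
          mul_le_mul_of_nonneg_left h2 h3
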